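/- Let T > 0, let s : ℝ → ℝ be square-integrable with s = 0 almost everywhere outside [0, T] and ∫_ℝ s(t)² dt = 1, and let τ ∈ (0, T]. Then |∫_ℝ s(t)·s(t−τ) dt| + |∫_ℝ s(t)·s(t+T−τ) dt| ≤ 1. -/

import Mathlib

open MeasureTheory Real

private lemma l2_mul_integrable {f g : ℝ → ℝ} (hf : MemLp f 2 (volume : Measure ℝ))
    (hg : MemLp g 2 (volume : Measure ℝ)) : Integrable (fun t => f t * g t) volume := by
  refine ((hf.integrable_sq.add hg.integrable_sq).div_const 2).mono'
    (hf.aestronglyMeasurable.mul hg.aestronglyMeasurable) ?_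
  filter_upwards with t
  simp only [Pi.add_apply, Real.norm_eq_abs, abs_mul]
  nlinarith [sq_nonneg (|f t| - |g t|), sq_abs (f t), sq_abs (g t),
    abs_nonneg (f t), abs_nonneg (g t)]

theorem stmt_13 (T : ℝ) (hT : 0 < T) (s : ℝ → ℝ)
    (hs : MemLp s 2 (volume : Measure ℝ))
    (hsupp : ∀ᵐ t : ℝ, t ∉ Set.Icc 0 T → s t = 0)
    (hnorm : ∫ t : ℝ, (s t)^2 = 1)
    (τ : ℝ) (hτ : τ ∈ Set.Ioc 0 T) :
    |∫ t : ℝ, s t * s (t - τ)| + |∫ t : ℝ, s t * s (t + T - τ)| ≤ 1 := by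
  obtain ⟨hτ0, hτT⟩ := hτ
  have hTτ0 : 0 ≤ T - τ := by linarith
  set f : ℝ → ℝ := fun t => s (t - τ) with hfdef
  set g : ℝ → ℝ := fun t => s (t + (T - τ)) with hgdef
  have hmp1 : MeasurePreserving (fun t : ℝ => t - τ) volume volume :=
    measurePreserving_sub_right volume τ
  have hmp2 : MeasurePreserving (fun t : ℝ => t + (T - τ)) volume volume :=
    measurePreserving_add_right volume (T - τ)
  have hf2 : MemLp f 2 volume := hs.comp_measurePreserving hmp1
  have hg2 : MemLp g 2 volume := hs.comp_measurePreserving hmp2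
  have hsuppf : ∀ᵐ t : ℝ, t - τ ∉ Set.Icc 0 T → s (t - τ) = 0 :=
    hmp1.quasiMeasurePreserving.ae hsupp
  have hsuppg : ∀ᵐ t : ℝ, t + (T - τ) ∉ Set.Icc 0 T → s (t + (T - τ)) = 0 :=
    hmp2.quasiMeasurePreserving.ae hsupp
  -- rewrite the second integral
  have hrw : (∫ t : ℝ, s t * s (t + T - τ)) = ∫ t : ℝ, s t * g t := by
    refine integral_congr_ae (Filter.Eventually.of_forall fun t => ?_)
    simp only [hgdef]
    ring_nf
  rw [hrw]
  -- the indicator function h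
  set h : ℝ → ℝ := Set.indicator (Set.Icc 0 T) (fun t => |f t| + |g t|) with hhdef
  have hh2 : MemLp h 2 volume := (hf2.abs.add hg2.abs).indicator measurableSet_Icc
  have hint_sf : Integrable (fun t => s t * f t) volume := l2_mul_integrable hs hf2
  have hint_sg : Integrable (fun t => s t * g t) volume := l2_mul_integrable hs hg2
  -- step 1: bound by integral of |s| * h
  have step1 : |∫ t : ℝ, s t * f t| + |∫ t : ℝ, s t * g t| ≤ ∫ t : ℝ, |s t| * h t := by
    have e1 : |∫ t : ℝ, s t * f t| ≤ ∫ t : ℝ, |s t * f t| := by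
      simpa only [Real.norm_eq_abs] using
        norm_integral_le_integral_norm (μ := (volume : Measure ℝ)) (fun t => s t * f t)
    have e2 : |∫ t : ℝ, s t * g t| ≤ ∫ t : ℝ, |s t * g t| := by
      simpa only [Real.norm_eq_abs] using
        norm_integral_le_integral_norm (μ := (volume : Measure ℝ)) (fun t => s t * g t)
    have e3 : (∫ t : ℝ, |s t * f t|) + (∫ t : ℝ, |s t * g t|)
        = ∫ t : ℝ, (|s t * f t| + |s t * g t|) :=
      (integral_add hint_sf.abs hint_sg.abs).symm
    have e4 : (∫ t : ℝ, (|s t * f t| + |s t * g t|)) = ∫ t : ℝ, |s t| * h t := by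
      refine integral_congr_ae ?_
      filter_upwards [hsupp] with t ht
      by_cases htI : t ∈ Set.Icc 0 T
      · simp only [hhdef, Set.indicator_of_mem htI, abs_mul]
        ring
      · simp [hhdef, Set.indicator_of_notMem htI, ht htI]
    linarith [e1, e2, e3.symm ▸ e4]
  -- Cauchy–Schwarz
  have habs2 : MemLp (fun t => |s t|) (ENNReal.ofReal 2) volume := by
    rw [show ENNReal.ofReal (2:ℝ) = 2 by norm_num]; exact hs.abs
  have hh2' : MemLp h (ENNReal.ofReal 2) volume := by
    rw [show ENNReal.ofReal (2:ℝ) = 2 by norm_num]; exact hh2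
  have hCS : (∫ t : ℝ, |s t| * h t)
      ≤ (∫ t : ℝ, |s t| ^ (2:ℝ)) ^ ((1:ℝ)/2) * (∫ t : ℝ, h t ^ (2:ℝ)) ^ ((1:ℝ)/2) := by
    refine integral_mul_le_Lp_mul_Lq_of_nonneg (by constructor <;> norm_num)
      (Filter.Eventually.of_forall fun t => abs_nonneg _)
      (Filter.Eventually.of_forall fun t => Set.indicator_nonneg
        (fun u _ => by positivity) t) habs2 hh2'
  -- energy of |s|
  have hpow : ∀ x : ℝ, x ^ (2:ℝ) = x ^ 2 := fun x => by
    rw [show (2:ℝ) = ((2:ℕ):ℝ) by norm_num, Real.rpow_natCast]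
  have hE1 : (∫ t : ℝ, |s t| ^ (2:ℝ)) = 1 := by
    simp only [hpow, sq_abs]
    exact hnorm
  -- energy of h
  have hne : ∀ᵐ t : ℝ, t ≠ τ := by
    have : (volume : Measure ℝ) {τ} = 0 := measure_singleton τ
    exact (MeasureTheory.measure_eq_zero_iff_ae_notMem.mp this).mono fun t ht => ht
  have hneT : ∀ᵐ t : ℝ, t ≠ T - τ := by
    have : (volume : Measure ℝ) {T - τ} = 0 := measure_singleton _
    exact (MeasureTheory.measure_eq_zero_iff_ae_notMem.mp this).mono fun t ht => ht
  set A : ℝ → ℝ := Set.indicator (Set.Icc 0 (T - τ)) (fun u => s u ^ 2) with hAdef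
  set B : ℝ → ℝ := Set.indicator (Set.Icc (T - τ) T) (fun u => s u ^ 2) with hBdef
  have hAint : Integrable A volume := hs.integrable_sq.indicator measurableSet_Icc
  have hBint : Integrable B volume := hs.integrable_sq.indicator measurableSet_Icc
  have hptw : ∀ᵐ t : ℝ, h t ^ 2 = A (t - τ) + B (t + (T - τ)) := by
    filter_upwards [hsuppf, hsuppg, hne] with t h1 h2 h3
    rcases lt_trichotomy t τ with hlt | heq | hgt
    · -- t < τ: f t = 0
      have hf0 : f t = 0 := h1 (by simp [Set.mem_Icc]; intro h'; linarith)
      have hA0 : A (t - τ) = 0 :=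
        Set.indicator_of_notMem (by simp [Set.mem_Icc]; intro h'; linarith) _
      rw [hA0, zero_add]
      simp only [hhdef, hBdef, hAdef, Set.indicator_apply, Set.mem_Icc]
      split_ifs with hP hR hR
      · rw [hf0]; simp [sq_abs, hgdef]
      · exfalso; obtain ⟨a1, a2⟩ := hP; push_neg at hR
        have := hR (by linarith); linarith
      · exfalso; push_neg at hP
        obtain ⟨b1, b2⟩ := hR
        have ht0 : 0 ≤ t := by linarith
        have htT : t ≤ T := by linarith
        have := hP ht0; linarith
      · simp
    · exact absurd heq h3
    · -- t > τ: g t = 0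
      have hg0 : g t = 0 := h2 (by simp [Set.mem_Icc]; intro h'; linarith)
      have hB0 : B (t + (T - τ)) = 0 :=
        Set.indicator_of_notMem (by simp [Set.mem_Icc]; intro h'; linarith) _
      rw [hB0, add_zero]
      simp only [hhdef, hAdef, Set.indicator_apply, Set.mem_Icc]
      split_ifs with hP hQ hQ
      · rw [hg0]; simp [sq_abs, hfdef]
      · exfalso; obtain ⟨a1, a2⟩ := hP; push_neg at hQ
        have := hQ (by linarith); linarith
      · exfalso; push_neg at hP
        obtain ⟨b1, b2⟩ := hQ
        have ht0 : 0 ≤ t := by linarith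
        have htT : t ≤ T := by linarith
        have := hP ht0; linarith
      · simp
  have hEA : (∫ t : ℝ, A (t - τ)) = ∫ t : ℝ, A t := integral_sub_right_eq_self A τ
  have hEB : (∫ t : ℝ, B (t + (T - τ))) = ∫ t : ℝ, B t := integral_add_right_eq_self B (T - τ)
  have hABsum : (∫ t : ℝ, A t) + (∫ t : ℝ, B t) = 1 := by
    rw [← integral_add hAint hBint, ← hnorm]
    refine integral_congr_ae ?_
    filter_upwards [hsupp, hneT] with t ht htne
    simp only [hAdef, hBdef, Set.indicator_apply, Set.mem_Icc]
    split_ifs with hQ hR hR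
    · exfalso; obtain ⟨a1, a2⟩ := hQ; obtain ⟨b1, b2⟩ := hR
      exact htne (le_antisymm a2 b1)
    · ring
    · ring
    · push_neg at hQ hR
      by_cases ht0 : t ∈ Set.Icc 0 T
      · exfalso
        obtain ⟨c1, c2⟩ := ht0
        have := hQ c1
        have := hR (le_of_lt (hQ c1))
        linarith
      · simp [ht ht0]
  have hE2 : (∫ t : ℝ, h t ^ (2:ℝ)) = 1 := by
    simp only [hpow]
    rw [integral_congr_ae hptw]
    have hint1 : Integrable (fun t : ℝ => A (t - τ)) volume :=
      memLp_one_iff_integrable.mp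
        ((memLp_one_iff_integrable.mpr hAint).comp_measurePreserving hmp1)
    have hint2 : Integrable (fun t : ℝ => B (t + (T - τ))) volume :=
      memLp_one_iff_integrable.mp
        ((memLp_one_iff_integrable.mpr hBint).comp_measurePreserving hmp2)
    rw [integral_add hint1 hint2, hEA, hEB, hABsum]
  calc |∫ t : ℝ, s t * f t| + |∫ t : ℝ, s t * g t|
      ≤ ∫ t : ℝ, |s t| * h t := step1
    _ ≤ (∫ t : ℝ, |s t| ^ (2:ℝ)) ^ ((1:ℝ)/2) * (∫ t : ℝ, h t ^ (2:ℝ)) ^ ((1:ℝ)/2) := hCS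
    _ = 1 := by rw [hE1, hE2]; norm_num
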